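/- Uniqueness in the Doob–Meyer decomposition with natural increasing parts (classical single-measure form of Theorem 3.2(2)): Let (Ω, ℱ, μ) be a probability space with a filtration (ℱ_s)_{s ∈ [0,∞)}. Let M′, M″ be martingales and A′, A″ adapted processes with each A′_t, A″_t integrable, A′_0 = A″_0 = 0 a.e., and M′_t − A′_t = M″_t − A″_t a.e. for every t. Set C := A′ − A″. Suppose that for each t > 0 there is a sequence of partitions Π_n = {0 = t₀⁽ⁿ⁾ ≤ ⋯ ≤ t_{m_n}⁽ⁿ⁾ = t} of [0, t] with mesh tending to 0 such that for every uniformly bounded martingale ξ, ∫ ξ_t · C_t dμ = lim_{n → ∞} ∫ (∑_{j=1}^{m_n} ξ_{t_{j−1}⁽ⁿ⁾} · (C_{t_j⁽ⁿ⁾} − C_{t_{j−1}⁽ⁿ⁾})) dμ. Then for every t, A′_t = A″_t μ-almost everywhere (and hence M′_t = M″_t μ-almost everywhere). -/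

import Mathlib

open MeasureTheory Filter
open scoped NNReal

/-- Uniqueness in the Doob–Meyer decomposition with natural increasing parts:
if `M' - A' = M'' - A''` with `M', M''` martingales and `A', A''` adapted, integrable,
vanishing at `0`, and the difference `C = A' - A''` satisfies the "natural" limit
identity along partitions of vanishing mesh against every bounded martingale, then
`A'_t = A''_t` (and hence `M'_t = M''_t`) a.e. for every `t`. -/
theorem doob_meyer_decomposition_unique
    {Ω : Type*} {mΩ : MeasurableSpace Ω} {μ : Measure Ω} [IsProbabilityMeasure μ]
    (ℱ : Filtration ℝ≥0 mΩ) (M' M'' A' A'' : ℝ≥0 → Ω → ℝ)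
    (hM' : Martingale M' ℱ μ) (hM'' : Martingale M'' ℱ μ)
    (hA' : Adapted ℱ A') (hA'' : Adapted ℱ A'')
    (hA'int : ∀ t, Integrable (A' t) μ) (hA''int : ∀ t, Integrable (A'' t) μ)
    (hA'0 : A' 0 =ᵐ[μ] 0) (hA''0 : A'' 0 =ᵐ[μ] 0)
    (hdecomp : ∀ t, (fun ω => M' t ω - A' t ω) =ᵐ[μ] fun ω => M'' t ω - A'' t ω)
    (C : ℝ≥0 → Ω → ℝ) (hC : C = fun t ω => A' t ω - A'' t ω)
    (hnatural : ∀ t : ℝ≥0, 0 < t →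
      ∃ (m : ℕ → ℕ) (ts : (n : ℕ) → Fin (m n + 1) → ℝ≥0),
        (∀ n, Monotone (ts n)) ∧ (∀ n, ts n 0 = 0) ∧
        (∀ n, ts n (Fin.last (m n)) = t) ∧
        (∀ ε : ℝ≥0, 0 < ε → ∃ N, ∀ n ≥ N, ∀ j : Fin (m n),
            ts n j.succ - ts n j.castSucc < ε) ∧
        (∀ ξ : ℝ≥0 → Ω → ℝ, Martingale ξ ℱ μ → (∃ K, ∀ s ω, |ξ s ω| ≤ K) →
          Tendsto
            (fun n => ∫ ω, (∑ j : Fin (m n),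
                ξ (ts n j.castSucc) ω *
                  (C (ts n j.succ) ω - C (ts n j.castSucc) ω)) ∂μ)
            atTop (nhds (∫ ω, ξ t ω * C t ω ∂μ)))) :
    ∀ t, A' t =ᵐ[μ] A'' t ∧ M' t =ᵐ[μ] M'' t := by
  intro t
  -- basic facts about C
  have hCint : ∀ s, Integrable (C s) μ := by
    intro s; rw [hC]; exact (hA'int s).sub (hA''int s)
  have hCadapted : ∀ s, StronglyMeasurable[ℱ s] (C s) := by
    intro s; rw [hC]; exact ((hA' s).sub (hA'' s)).stronglyMeasurable
  set N : ℝ≥0 → Ω → ℝ := fun s ω => M' s ω - M'' s ω with hNdef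
  have hNmart : Martingale N ℱ μ := hM'.sub hM''
  have hCN : ∀ s, C s =ᵐ[μ] N s := by
    intro s
    filter_upwards [hdecomp s] with ω h
    simp only [hC, hNdef]
    have : M' s ω - A' s ω = M'' s ω - A'' s ω := h
    linarith
  -- first reduce to `C t =ᵐ[μ] 0`
  suffices hCt : C t =ᵐ[μ] 0 by
    have hA : A' t =ᵐ[μ] A'' t := by
      filter_upwards [hCt] with ω h
      have : A' t ω - A'' t ω = 0 := by simpa [hC] using h
      linarith
    refine ⟨hA, ?_⟩
    filter_upwards [hdecomp t, hA] with ω h1 h2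
    have : M' t ω - A' t ω = M'' t ω - A'' t ω := h1
    linarith
  rcases eq_or_lt_of_le (zero_le : (0:ℝ≥0) ≤ t) with ht | ht
  · -- t = 0
    filter_upwards [hA'0, hA''0] with ω h1 h2
    simp [hC, ← ht, h1, h2]
  -- t > 0 : use the natural condition
  obtain ⟨m, ts, hmono, hts0, htslast, hmesh, hlim⟩ := hnatural t ht
  -- key: ∫ ξ_t C_t = 0 for every uniformly bounded martingale ξ
  have key : ∀ ξ : ℝ≥0 → Ω → ℝ, Martingale ξ ℱ μ → (∃ K, ∀ s ω, |ξ s ω| ≤ K) →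
      ∫ ω, ξ t ω * C t ω ∂μ = 0 := by
    intro ξ hξ hbdd
    obtain ⟨K, hK⟩ := hbdd
    have hterm : ∀ s u : ℝ≥0, s ≤ u →
        ∫ ω, ξ s ω * (C u ω - C s ω) ∂μ = 0 := by
      intro s u hsu
      have hξm : AEStronglyMeasurable (ξ s) μ :=
        ((hξ.stronglyAdapted s).mono (ℱ.le s)).aestronglyMeasurable
      have heq : (fun ω => ξ s ω * (C u ω - C s ω))
          =ᵐ[μ] fun ω => ξ s ω * (N u ω - N s ω) := by
        filter_upwards [hCN u, hCN s] with ω h1 h2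
        rw [h1, h2]
      rw [integral_congr_ae heq]
      have hNint : Integrable (fun ω => N u ω - N s ω) μ :=
        (hNmart.integrable u).sub (hNmart.integrable s)
      have hint : Integrable (fun ω => ξ s ω * (N u ω - N s ω)) μ :=
        hNint.bdd_mul hξm (Filter.Eventually.of_forall fun ω => by simpa using hK s ω)
      have hpull : μ[(fun ω => ξ s ω * (N u ω - N s ω)) | ℱ s]
          =ᵐ[μ] fun ω => ξ s ω * (μ[(fun ω => N u ω - N s ω) | ℱ s]) ω := by
        have := condExp_mul_of_stronglyMeasurable_left (μ := μ) (m := ℱ s)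
          (f := ξ s) (g := fun ω => N u ω - N s ω)
          (hξ.stronglyAdapted s) (by exact hint) hNint
        filter_upwards [this] with ω h
        exact h
      have hzero : μ[(fun ω => N u ω - N s ω) | ℱ s] =ᵐ[μ] 0 := by
        have h1 := condExp_sub (μ := μ) (m := ℱ s)
          (hNmart.integrable u) (hNmart.integrable s)
        have h2 : μ[N u | ℱ s] =ᵐ[μ] N s := hNmart.condExp_ae_eq hsu
        have h3 : μ[N s | ℱ s] =ᵐ[μ] N s := hNmart.condExp_ae_eq le_rfl
        filter_upwards [h1, h2, h3] with ω e1 e2 e3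
        show (μ[N u - N s | ℱ s]) ω = 0
        rw [e1, Pi.sub_apply, e2, e3, sub_self]
      rw [← integral_condExp (ℱ.le s) (f := fun ω => ξ s ω * (N u ω - N s ω))]
      rw [integral_congr_ae (hpull.trans ?_), integral_zero]
      filter_upwards [hzero] with ω h
      simp [h]
    have hconst : ∀ n, (∫ ω, (∑ j : Fin (m n),
        ξ (ts n j.castSucc) ω *
          (C (ts n j.succ) ω - C (ts n j.castSucc) ω)) ∂μ) = 0 := by
      intro n
      have hintj : ∀ j : Fin (m n), Integrable
          (fun ω => ξ (ts n j.castSucc) ω *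
            (C (ts n j.succ) ω - C (ts n j.castSucc) ω)) μ := by
        intro j
        exact ((hCint _).sub (hCint _)).bdd_mul
          (((hξ.stronglyAdapted _).mono (ℱ.le _)).aestronglyMeasurable)
          (Filter.Eventually.of_forall fun ω => by simpa using hK _ ω)
      rw [integral_finset_sum _ fun j _ => hintj j]
      refine Finset.sum_eq_zero fun j _ => ?_
      exact hterm _ _ (hmono n (Fin.castSucc_le_succ j))
    have h1 : Tendsto (fun n => ∫ ω, (∑ j : Fin (m n),
        ξ (ts n j.castSucc) ω *
          (C (ts n j.succ) ω - C (ts n j.castSucc) ω)) ∂μ)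
        atTop (nhds 0) := by
      simp only [hconst]
      exact tendsto_const_nhds
    exact tendsto_nhds_unique (hlim ξ hξ ⟨K, hK⟩) h1
  -- now pick a suitable bounded martingale built from sign of C t
  set g : Ω → ℝ := fun ω => if 0 ≤ C t ω then 1 else -1 with hg
  have hCtmeas : Measurable (C t) := ((hCadapted t).mono (ℱ.le t)).measurable
  have hgmeas : Measurable g := by
    refine Measurable.ite (measurableSet_le measurable_const hCtmeas)
      measurable_const measurable_const
  have hgbdd : ∀ ω, |g ω| ≤ 1 := by
    intro ω; simp only [hg]; split <;> simp
  have hgint : Integrable g μ := by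
    refine ⟨hgmeas.aestronglyMeasurable, ?_⟩
    refine HasFiniteIntegral.mono' (integrable_const (1 : ℝ)).2 ?_
    filter_upwards with ω using by simpa using hgbdd ω
  -- ξ₀ = conditional expectations of g, ξ its truncation (pointwise bounded)
  set ξ₀ : ℝ≥0 → Ω → ℝ := fun s => μ[g | ℱ s] with hξ₀
  have hξ₀mart : Martingale ξ₀ ℱ μ := martingale_condExp g ℱ μ
  have hξ₀bdd : ∀ s, ∀ᵐ ω ∂μ, |ξ₀ s ω| ≤ 1 := by
    intro s
    have := ae_bdd_condExp_of_ae_bdd (m := ℱ s) (μ := μ) (R := 1) (f := g)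
      (Filter.Eventually.of_forall fun ω => by simpa using hgbdd ω)
    simpa using this
  set ξ : ℝ≥0 → Ω → ℝ := fun s ω => max (-1) (min 1 (ξ₀ s ω)) with hξdef
  have hξae : ∀ s, ξ s =ᵐ[μ] ξ₀ s := by
    intro s
    filter_upwards [hξ₀bdd s] with ω h
    have h1 : -1 ≤ ξ₀ s ω := (abs_le.1 h).1
    have h2 : ξ₀ s ω ≤ 1 := (abs_le.1 h).2
    simp [hξdef, min_eq_right h2, max_eq_right h1]
  have hξadapted : StronglyAdapted ℱ ξ := by
    intro s
    exact (continuous_const.max (continuous_const.min continuous_id)).comp_stronglyMeasurable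
      stronglyMeasurable_condExp
  have hξmart : Martingale ξ ℱ μ := by
    refine ⟨hξadapted, fun i j hij => ?_⟩
    calc μ[ξ j | ℱ i] =ᵐ[μ] μ[ξ₀ j | ℱ i] := condExp_congr_ae (hξae j)
      _ =ᵐ[μ] ξ₀ i := hξ₀mart.condExp_ae_eq hij
      _ =ᵐ[μ] ξ i := (hξae i).symm
  have hξbdd : ∀ s ω, |ξ s ω| ≤ 1 := by
    intro s ω
    rw [abs_le]
    constructor
    · exact le_max_left _ _
    · exact max_le (by norm_num) (min_le_left _ _)
  have hzero : ∫ ω, ξ t ω * C t ω ∂μ = 0 := key ξ hξmart ⟨1, hξbdd⟩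
  -- ∫ ξ t * C t = ∫ ξ₀ t * C t = ∫ g * C t = ∫ |C t|
  have e1 : ∫ ω, ξ t ω * C t ω ∂μ = ∫ ω, ξ₀ t ω * C t ω ∂μ := by
    refine integral_congr_ae ?_
    filter_upwards [hξae t] with ω h
    rw [h]
  have hgCint : Integrable (fun ω => C t ω * g ω) μ := by
    have : Integrable (fun ω => g ω * C t ω) μ :=
      (hCint t).bdd_mul hgmeas.aestronglyMeasurable
        (Filter.Eventually.of_forall fun ω => by simpa using hgbdd ω)
    exact this.congr (Filter.Eventually.of_forall fun ω => mul_comm _ _)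
  have e2 : ∫ ω, ξ₀ t ω * C t ω ∂μ = ∫ ω, C t ω * g ω ∂μ := by
    have hpull := condExp_mul_of_stronglyMeasurable_left (μ := μ) (m := ℱ t)
      (f := C t) (g := g) (hCadapted t) (by exact hgCint) hgint
    calc ∫ ω, ξ₀ t ω * C t ω ∂μ
        = ∫ ω, C t ω * (μ[g | ℱ t]) ω ∂μ := by
          refine integral_congr_ae (Filter.Eventually.of_forall fun ω => ?_)
          simp [hξ₀, mul_comm]
      _ = ∫ ω, (μ[(fun ω => C t ω * g ω) | ℱ t]) ω ∂μ := by
          refine integral_congr_ae ?_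
          filter_upwards [hpull] with ω h
          exact h.symm
      _ = ∫ ω, C t ω * g ω ∂μ := integral_condExp (ℱ.le t)
  have e3 : (fun ω => C t ω * g ω) = fun ω => |C t ω| := by
    funext ω
    simp only [hg]
    split_ifs with h
    · rw [mul_one, abs_of_nonneg h]
    · push_neg at h
      rw [abs_of_neg h]
      ring
  have habs : ∫ ω, |C t ω| ∂μ = 0 := by
    rw [← e3, ← e2, ← e1, hzero]
  have hCabs : Integrable (fun ω => |C t ω|) μ := (hCint t).abs
  have := (integral_eq_zero_iff_of_nonneg
    (fun ω => abs_nonneg (C t ω)) hCabs).1 habs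
  filter_upwards [this] with ω h
  have : |C t ω| = 0 := h
  simpa [abs_eq_zero] using this
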